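/- Let c : ℝ≥0 → ℝ≥0 be a nonnegative nondecreasing cost function and let q ≥ 0 be a fixed flow value. Define c̄(x) = max{c(x), c(q)}. Then for every x ≥ 0, c̄(x)·x − c(x)·x ≤ c(q)·q. -/
import Mathlib


/-- The key per-edge inequality for the selfish routing resource augmentation
theorem: replacing the cost function `c` by the fictitious cost function
`x ↦ max (c x) (c q)` increases the cost `c x * x` of any flow value `x ≥ 0`
by at most the equilibrium cost `c q * q`. -/
theorem fictitious_cost_increase (c : ℝ → ℝ)
    (hnonneg : ∀ x, 0 ≤ x → 0 ≤ c x)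
    (hmono : ∀ x y, 0 ≤ x → x ≤ y → c x ≤ c y)
    (q : ℝ) (hq : 0 ≤ q) (x : ℝ) (hx : 0 ≤ x) :
    max (c x) (c q) * x - c x * x ≤ c q * q := by
  rcases le_total q x with h | h
  · rw [max_eq_left (hmono q x hq h)]
    simp [mul_nonneg (hnonneg q hq) hq]
  · have hcx := hmono x q hx h
    rw [max_eq_right hcx, ← sub_mul]
    calc (c q - c x) * x ≤ c q * x := by
          have := hnonneg x hx; nlinarith
      _ ≤ c q * q := by
          have := hnonneg q hq; nlinarith
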